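/- Mean-zero cancellation along a nearly horizontal graph. Let f0 : ℝ² → ℝ be 2π-periodic in its first variable, differentiable in its second variable with ‖∂_y f0‖_∞ := sup_{x,y} |∂_y f0(x,y)| < ∞, and satisfy ∫_0^{2π} f0(x,y) dx = 0 for every y. Let ε > 0 and let h : [0,2π] → ℝ be differentiable with |h'(x)| ≤ ε for all x. Then | ∫_0^{2π} f0(x, h(x)) dx | ≤ 4π² ε ‖∂_y f0‖_∞. -/
import Mathlib

open MeasureTheory

/-- **Mean-zero cancellation along a nearly horizontal graph.**
If `f0` is `2π`-periodic and mean-zero in `x`, with `|∂_y f0| ≤ K`, and `h` is a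
graph with slope `|h'| ≤ ε` on `[0,2π]`, then the integral of `f0` along the graph
of `h` over one horizontal period is of size at most `4π²εK`.  (The integrability
hypotheses make the integrals in the statement meaningful.) -/
theorem mean_zero_cancellation_graph
    (f0 : ℝ → ℝ → ℝ)
    (hper : ∀ x y : ℝ, f0 (x + 2 * Real.pi) y = f0 x y)
    (hdiff : ∀ x : ℝ, Differentiable ℝ (f0 x))
    (K : ℝ) (hK : ∀ x y : ℝ, |deriv (f0 x) y| ≤ K)
    (hmean : ∀ y : ℝ, (∫ x in (0:ℝ)..(2 * Real.pi), f0 x y) = 0)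
    (hint : ∀ y : ℝ, IntervalIntegrable (fun x => f0 x y) volume 0 (2 * Real.pi))
    (ε : ℝ) (hε : 0 < ε)
    (h h' : ℝ → ℝ)
    (hh : ∀ x ∈ Set.Icc (0:ℝ) (2 * Real.pi),
      HasDerivWithinAt h (h' x) (Set.Icc (0:ℝ) (2 * Real.pi)) x)
    (hh' : ∀ x ∈ Set.Icc (0:ℝ) (2 * Real.pi), |h' x| ≤ ε)
    (hinth : IntervalIntegrable (fun x => f0 x (h x)) volume 0 (2 * Real.pi)) :
    |∫ x in (0:ℝ)..(2 * Real.pi), f0 x (h x)|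
      ≤ 4 * Real.pi ^ 2 * ε * K := by
  have hpi := Real.pi_pos
  have hK0 : (0:ℝ) ≤ K := le_trans (abs_nonneg _) (hK 0 0)
  have h0mem : (0:ℝ) ∈ Set.Icc (0:ℝ) (2 * Real.pi) := ⟨le_refl _, by positivity⟩
  -- bound on |h x - h 0|
  have hb : ∀ x ∈ Set.Icc (0:ℝ) (2 * Real.pi), |h x - h 0| ≤ ε * (2 * Real.pi) := by
    intro x hx
    have := Convex.norm_image_sub_le_of_norm_hasDerivWithin_le hh
      (fun y hy => by simpa using hh' y hy) (convex_Icc _ _) h0mem hx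
    have hxb : |x - 0| ≤ 2 * Real.pi := by
      rw [sub_zero, abs_of_nonneg hx.1]; exact hx.2
    calc |h x - h 0| ≤ ε * |x - 0| := by simpa [Real.norm_eq_abs] using this
      _ ≤ ε * (2 * Real.pi) := by
          exact mul_le_mul_of_nonneg_left hxb hε.le
  -- Lipschitz in y
  have hlip : ∀ x a b : ℝ, |f0 x a - f0 x b| ≤ K * |a - b| := by
    intro x a b
    have := Convex.norm_image_sub_le_of_norm_hasDerivWithin_le
      (f := f0 x) (f' := fun y => deriv (f0 x) y) (s := Set.univ)
      (fun y _ => ((hdiff x).differentiableAt.hasDerivAt).hasDerivWithinAt)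
      (fun y _ => by simpa using hK x y) convex_univ (Set.mem_univ b) (Set.mem_univ a)
    simpa [Real.norm_eq_abs] using this
  -- rewrite the integral
  have hsub : (∫ x in (0:ℝ)..(2 * Real.pi), f0 x (h x))
      = ∫ x in (0:ℝ)..(2 * Real.pi), (f0 x (h x) - f0 x (h 0)) := by
    rw [intervalIntegral.integral_sub hinth (hint (h 0)), hmean (h 0), sub_zero]
  rw [hsub]
  have hbound : ∀ x ∈ Set.uIoc (0:ℝ) (2 * Real.pi),
      ‖f0 x (h x) - f0 x (h 0)‖ ≤ K * (ε * (2 * Real.pi)) := by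
    intro x hx
    have hx' : x ∈ Set.Icc (0:ℝ) (2 * Real.pi) := by
      rw [Set.uIoc_of_le (by positivity)] at hx
      exact ⟨hx.1.le, hx.2⟩
    calc ‖f0 x (h x) - f0 x (h 0)‖ ≤ K * |h x - h 0| := hlip x (h x) (h 0)
      _ ≤ K * (ε * (2 * Real.pi)) := mul_le_mul_of_nonneg_left (hb x hx') hK0
  have := intervalIntegral.norm_integral_le_of_norm_le_const hbound
  rw [Real.norm_eq_abs] at this
  calc |∫ x in (0:ℝ)..(2 * Real.pi), (f0 x (h x) - f0 x (h 0))|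
      ≤ K * (ε * (2 * Real.pi)) * |2 * Real.pi - 0| := this
    _ = 4 * Real.pi ^ 2 * ε * K := by
        rw [sub_zero, abs_of_nonneg (by positivity : (0:ℝ) ≤ 2 * Real.pi)]; ring
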